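/- The matrix exponential map restricts to a bijection from the space S(n) of real symmetric n×n matrices onto the set SPD(n) of symmetric positive definite n×n matrices. -/

import Mathlib

open Matrix

lemma isSymm_iff_isSelfAdjoint {n : ℕ} (A : Matrix (Fin n) (Fin n) ℝ) :
    A.IsSymm ↔ IsSelfAdjoint A := by
  rw [Matrix.IsSymm, isSelfAdjoint_iff, Matrix.star_eq_conjTranspose,
    Matrix.conjTranspose_eq_transpose_of_trivial]

lemma posDef_of_posSemidef_isUnit {n : ℕ} {X : Matrix (Fin n) (Fin n) ℝ}
    (h : X.PosSemidef) (hu : IsUnit X) : X.PosDef := by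
  refine PosDef.of_dotProduct_mulVec_pos h.1 fun x hx => lt_of_le_of_ne (h.dotProduct_mulVec_nonneg x) fun heq => hx ?_
  have h0 : X *ᵥ x = 0 := (h.dotProduct_mulVec_zero_iff x).mp heq.symm
  have hinj := Matrix.mulVec_injective_iff_isUnit.mpr hu
  have := hinj (by simpa using h0 : X *ᵥ x = X *ᵥ 0)
  simpa using this

lemma exp_posDef {n : ℕ} {S : Matrix (Fin n) (Fin n) ℝ} (hS : S.IsSymm) :
    (NormedSpace.exp S).PosDef := by
  have hSA : IsSelfAdjoint S := (isSymm_iff_isSelfAdjoint S).mp hS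
  have hhalf : IsSelfAdjoint ((1 / 2 : ℝ) • S) := by rw [isSelfAdjoint_iff, star_smul, star_trivial, hSA.star_eq]
  have hherm : (NormedSpace.exp ((1 / 2 : ℝ) • S)).IsHermitian :=
    Matrix.IsHermitian.exp hhalf
  have hsplit : NormedSpace.exp S =
      NormedSpace.exp ((1 / 2 : ℝ) • S) * NormedSpace.exp ((1 / 2 : ℝ) • S) := by
    rw [← Matrix.exp_add_of_commute _ _ (Commute.refl _)]
    congr 1
    rw [← add_smul]
    norm_num
  have hpsd : (NormedSpace.exp S).PosSemidef := by
    rw [hsplit]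
    nth_rewrite 1 [← hherm.eq]
    exact Matrix.posSemidef_conjTranspose_mul_self _
  exact posDef_of_posSemidef_isUnit hpsd (Matrix.isUnit_exp S)

/-- The matrix exponential restricts to a bijection from the real symmetric `n × n`
matrices onto the symmetric positive definite `n × n` matrices. -/
theorem stmt9 {n : ℕ} :
    Set.BijOn (NormedSpace.exp)
      {S : Matrix (Fin n) (Fin n) ℝ | S.IsSymm}
      {X : Matrix (Fin n) (Fin n) ℝ | X.PosDef} := by
  letI : NormedRing (Matrix (Fin n) (Fin n) ℝ) := Matrix.instL2OpNormedRing
  letI : NormedAlgebra ℝ (Matrix (Fin n) (Fin n) ℝ) := Matrix.instL2OpNormedAlgebra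
  refine ⟨fun S hS => exp_posDef hS, ?_, ?_⟩
  · intro A hA B hB hAB
    have hA' : IsSelfAdjoint A := (isSymm_iff_isSelfAdjoint A).mp hA
    have hB' : IsSelfAdjoint B := (isSymm_iff_isSelfAdjoint B).mp hB
    have := congrArg CFC.log hAB
    rwa [CFC.log_exp A hA', CFC.log_exp B hB'] at this
  · intro X hX
    have hX' : Matrix.PosDef X := hX
    have hXA : IsSelfAdjoint X := hX'.isHermitian
    have hspec : ∀ x ∈ spectrum ℝ X, 0 < x := by
      intro x hx
      rw [hX'.isHermitian.spectrum_real_eq_range_eigenvalues] at hx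
      obtain ⟨i, rfl⟩ := hx
      exact hX'.eigenvalues_pos i
    refine ⟨CFC.log X, ?_, by open scoped MatrixOrder in exact CFC.exp_log X hX'.isStrictlyPositive⟩
    exact (isSymm_iff_isSelfAdjoint _).mpr IsSelfAdjoint.log
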